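/- For every bipartite graph G with at least one vertex, m(G) ≤ 2 + log₂ n(G). -/
import Mathlib


/-- A coloring `c` of the vertices is proper if adjacent vertices get different colors. -/
def IsProperColoring {V α : Type*} (G : SimpleGraph V) (c : V → α) : Prop :=
  ∀ ⦃u w⦄, G.Adj u w → c u ≠ c w

/-- `c` is an `L`-coloring of `G`: a proper coloring with `c v ∈ L v` for every vertex `v`. -/
def IsListColoring {V : Type*} (G : SimpleGraph V) (L : V → Finset ℕ) (c : V → ℕ) : Prop :=
  IsProperColoring G c ∧ ∀ v, c v ∈ L v

/-- `G` is uniquely `f`-list colorable: there is a list assignment giving each vertex `v`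
a list of exactly `f v` colors, from which `G` has exactly one list coloring. -/
def UniquelyFListColorable {V : Type*} (G : SimpleGraph V) (f : V → ℕ) : Prop :=
  ∃ L : V → Finset ℕ, (∀ v, (L v).card = f v) ∧ ∃! c, IsListColoring G L c

/-- `G` is uniquely `k`-list colorable. -/
def UniquelyKListColorable {V : Type*} (G : SimpleGraph V) (k : ℕ) : Prop :=
  UniquelyFListColorable G (fun _ => k)

/-- The m-number of `G`: the least `k` for which `G` is not uniquely `k`-list colorable. -/
noncomputable def mNumber {V : Type*} (G : SimpleGraph V) : ℕ :=
  sInf {k | ¬ UniquelyKListColorable G k}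

theorem key {V : Type} [Fintype V] [Nonempty V] (G : SimpleGraph V) (hbip : G.Colorable 2)
    (k : ℕ) (hk : Fintype.card V < 2 ^ (k - 1)) : ¬ UniquelyKListColorable G k := by
  rintro ⟨L, hL, c, ⟨hproper, hmem⟩, huniq⟩
  obtain ⟨C⟩ := hbip
  set S : Finset ℕ := Finset.univ.biUnion L with hS
  set T : V → Finset ℕ := fun v => (L v).erase (c v) with hT
  have hTS : ∀ v, T v ⊆ S := fun v =>
    (Finset.erase_subset _ _).trans (Finset.subset_biUnion_of_mem L (Finset.mem_univ v))
  have hTcard : ∀ v, (T v).card = k - 1 := fun v => by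
    simp [hT, Finset.card_erase_of_mem (hmem v), hL v]
  have hkS : k - 1 ≤ S.card := by
    obtain ⟨v⟩ := ‹Nonempty V›
    calc k - 1 = (T v).card := (hTcard v).symm
    _ ≤ S.card := Finset.card_le_card (hTS v)
  let p : V → Bool := fun v => decide (C v = 0)
  let Bad : V → Finset (Finset ℕ) :=
    fun v => S.powerset.filter (fun σ => ∀ a ∈ T v, decide (a ∈ σ) ≠ p v)
  have hBad : ∀ v, (Bad v).card ≤ 2 ^ (S.card - (k - 1)) := by
    intro v
    have hinj : Set.InjOn (fun σ : Finset ℕ => σ \ T v) (Bad v) := by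
      intro σ₁ h1 σ₂ h2 h12
      simp only [Bad, Finset.mem_coe, Finset.mem_filter] at h1 h2
      ext a
      by_cases ha : a ∈ T v
      · have e1 := h1.2 a ha
        have e2 := h2.2 a ha
        rcases Bool.eq_false_or_eq_true (p v) with hp | hp <;>
          simp [hp] at e1 e2 <;> simp [e1, e2]
      · have h12' : σ₁ \ T v = σ₂ \ T v := h12
        have : a ∈ σ₁ \ T v ↔ a ∈ σ₂ \ T v := by rw [h12']
        simpa [ha] using this
    have hmaps : ∀ σ ∈ Bad v, σ \ T v ∈ (S \ T v).powerset := by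
      intro σ hσ
      simp only [Bad, Finset.mem_filter, Finset.mem_powerset] at hσ ⊢
      exact Finset.sdiff_subset_sdiff hσ.1 le_rfl
    calc (Bad v).card ≤ ((S \ T v).powerset).card :=
          Finset.card_le_card_of_injOn _ hmaps hinj
    _ = 2 ^ (S.card - (k - 1)) := by
          rw [Finset.card_powerset, Finset.card_sdiff_of_subset (hTS v), hTcard v]
  have hunion : (Finset.univ.biUnion Bad).card < S.powerset.card := by
    calc (Finset.univ.biUnion Bad).card ≤ ∑ v : V, (Bad v).card :=
          Finset.card_biUnion_le
    _ ≤ ∑ _v : V, 2 ^ (S.card - (k - 1)) := Finset.sum_le_sum (fun v _ => hBad v)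
    _ = Fintype.card V * 2 ^ (S.card - (k - 1)) := by
          rw [Finset.sum_const, Finset.card_univ, smul_eq_mul]
    _ < 2 ^ (k - 1) * 2 ^ (S.card - (k - 1)) := by
          exact mul_lt_mul_of_pos_right hk (by positivity)
    _ = 2 ^ S.card := by rw [← pow_add, Nat.add_sub_cancel' hkS]
    _ = S.powerset.card := (Finset.card_powerset S).symm
  obtain ⟨σ, hσS, hσ⟩ : ∃ σ ∈ S.powerset, σ ∉ Finset.univ.biUnion Bad := by
    by_contra h
    push_neg at h
    exact absurd (Finset.card_le_card h) (not_le.mpr hunion)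
  have hgood : ∀ v, ∃ a ∈ T v, decide (a ∈ σ) = p v := by
    intro v
    have : σ ∉ Bad v := fun h => hσ (Finset.mem_biUnion.mpr ⟨v, Finset.mem_univ v, h⟩)
    simp only [Bad, Finset.mem_filter, hσS, true_and, not_forall] at this
    obtain ⟨a, ha, hne⟩ := this
    exact ⟨a, ha, not_not.mp hne⟩
  choose g hg1 hg2 using hgood
  have hfin2 : ∀ x y : Fin 2, x ≠ y → decide (x = 0) ≠ decide (y = 0) := by decide
  have hgproper : IsProperColoring G g := by
    intro u w huw hgeq
    have hC : C u ≠ C w := C.valid huw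
    have : p u ≠ p w := hfin2 _ _ hC
    apply this
    rw [← hg2 u, ← hg2 w, hgeq]
  have hglist : IsListColoring G L g := ⟨hgproper, fun v => Finset.mem_of_mem_erase (hg1 v)⟩
  have := huniq g hglist
  obtain ⟨v⟩ := ‹Nonempty V›
  have : g v ≠ c v := Finset.ne_of_mem_erase (hg1 v)
  exact this (by rw [huniq g hglist])

/-- For every bipartite graph `G` with at least one vertex,
`m(G) ≤ 2 + log₂ n(G)`. -/
theorem mNumber_le_log_of_bipartite
    {V : Type} [Fintype V] [Nonempty V] (G : SimpleGraph V) (hbip : G.Colorable 2) :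
    (mNumber G : ℝ) ≤ 2 + Real.logb 2 (Fintype.card V) := by
  have hn : 1 ≤ Fintype.card V := Fintype.card_pos
  have hnot : ¬ UniquelyKListColorable G (Nat.log 2 (Fintype.card V) + 2) := by
    apply key G hbip
    simpa using Nat.lt_pow_succ_log_self one_lt_two (Fintype.card V)
  have h1 : mNumber G ≤ Nat.log 2 (Fintype.card V) + 2 := Nat.sInf_le hnot
  have h2 : (Nat.log 2 (Fintype.card V) : ℝ) ≤ Real.logb 2 (Fintype.card V) := by
    have hpow : (2 : ℝ) ^ (Nat.log 2 (Fintype.card V)) ≤ (Fintype.card V : ℝ) := by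
      exact_mod_cast Nat.pow_log_le_self 2 (by omega : Fintype.card V ≠ 0)
    calc (Nat.log 2 (Fintype.card V) : ℝ)
        = Real.logb 2 ((2:ℝ) ^ (Nat.log 2 (Fintype.card V))) := by
          rw [Real.logb_pow, Real.logb_self_eq_one (by norm_num)]; ring
    _ ≤ Real.logb 2 (Fintype.card V) :=
          Real.logb_le_logb_of_le (by norm_num) (by positivity) hpow
  calc (mNumber G : ℝ) ≤ (Nat.log 2 (Fintype.card V) : ℝ) + 2 := by exact_mod_cast h1
  _ ≤ Real.logb 2 (Fintype.card V) + 2 := by linarith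
  _ = 2 + Real.logb 2 (Fintype.card V) := by ring
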